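/- Fix P_b > 0 and suppose h_mb·N_m/(N_b + g_b·P_b) < g_m. Then the function P_m ↦ γ(P_m, P_b) is strictly convex on [0, ∞); consequently, for any P̄_m > 0 its maximum over [0, P̄_m] is attained at P_m = 0 or at P_m = P̄_m. -/

import Mathlib

open Set

/-- `x ↦ d / (N + g x)` with `N, g, d > 0` is strictly convex on `[0, ∞)`. -/
lemma aux_strict (N g d : ℝ) (hN : 0 < N) (hg : 0 < g) (hd : 0 < d) :
    StrictConvexOn ℝ (Set.Ici 0) (fun x : ℝ => d / (N + g * x)) := by
  have h := strictConvexOn_zpow (m := (-1 : ℤ)) (by decide) (by decide)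
  refine ⟨convex_Ici 0, ?_⟩
  intro x hx y hy hxy a b ha hb hab
  have hgx : (0:ℝ) < N + g * x :=
    add_pos_of_pos_of_nonneg hN (mul_nonneg hg.le hx)
  have hgy : (0:ℝ) < N + g * y :=
    add_pos_of_pos_of_nonneg hN (mul_nonneg hg.le hy)
  have hne : N + g * x ≠ N + g * y := by
    intro hEq
    exact hxy (mul_left_cancel₀ hg.ne' (by linarith))
  have key := h.2 (mem_Ioi.2 hgx) (mem_Ioi.2 hgy) hne ha hb hab
  simp only [smul_eq_mul, zpow_neg_one] at key ⊢
  have hcomb : a * (N + g * x) + b * (N + g * y) = N + g * (a * x + b * y) := by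
    linear_combination N * hab
  rw [hcomb] at key
  have hcpos : (0:ℝ) < N + g * (a * x + b * y) := by nlinarith
  rw [div_eq_mul_inv, div_eq_mul_inv, div_eq_mul_inv]
  nlinarith [mul_lt_mul_of_pos_left key hd]

lemma aux_lin (c e : ℝ) : ConvexOn ℝ (Set.Ici (0:ℝ)) (fun x : ℝ => c * x + e) := by
  refine ⟨convex_Ici 0, ?_⟩
  intro x _ y _ a b _ _ hab
  simp only [smul_eq_mul]
  refine le_of_eq ?_
  linear_combination (-e) * hab

/-- If h_mb·N_m/(N_b + g_b·P_b) < g_m for a fixed P_b > 0, then γ(·, P_b) is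
strictly convex on [0, ∞), hence its maximum over [0, P̄_m] is attained at an
endpoint. -/
theorem stmt_2 (hmb hbm gb gm Nb Nm Pb : ℝ)
    (hhmb : 0 < hmb) (hhbm : 0 < hbm) (hgb : 0 < gb) (hgm : 0 < gm)
    (hNb : 0 < Nb) (hNm : 0 < Nm) (hPb : 0 < Pb)
    (γ : ℝ → ℝ → ℝ)
    (hγ : ∀ pm pb, γ pm pb =
      hmb * pm / (Nb + gb * pb) + hbm * pb / (Nm + gm * pm) +
      (hmb * pm / (Nb + gb * pb)) * (hbm * pb / (Nm + gm * pm)))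
    (hcond : hmb * Nm / (Nb + gb * Pb) < gm) :
    StrictConvexOn ℝ (Set.Ici 0) (fun pm => γ pm Pb) ∧
    ∀ Pm_max : ℝ, 0 < Pm_max → ∀ Pm ∈ Set.Icc (0:ℝ) Pm_max,
      γ Pm Pb ≤ max (γ 0 Pb) (γ Pm_max Pb) := by
  have hD : (0:ℝ) < Nb + gb * Pb := by positivity
  set c : ℝ := hmb / (Nb + gb * Pb) with hc
  set K : ℝ := hbm * Pb with hK
  have hcpos : 0 < c := by positivity
  have hKpos : 0 < K := by positivity
  have hcN : c * Nm < gm := by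
    have : hmb * Nm / (Nb + gb * Pb) = c * Nm := by
      rw [hc]; field_simp
    linarith [this ▸ hcond]
  set d : ℝ := K * (gm - c * Nm) / gm with hd
  have hdpos : 0 < d := by
    apply div_pos (mul_pos hKpos (by linarith)) hgm
  set e : ℝ := K * c / gm with he
  have heq : Set.EqOn (fun pm => γ pm Pb)
      (fun pm : ℝ => d / (Nm + gm * pm) + (c * pm + e)) (Set.Ici 0) := by
    intro pm hpm
    have hM : (0:ℝ) < Nm + gm * pm :=
      add_pos_of_pos_of_nonneg hNm (mul_nonneg hgm.le hpm)
    simp only [hγ, hc, hK, hd, he]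
    field_simp [(by rw [mul_comm]; exact hM.ne' : Nm + pm * gm ≠ 0)]
    ring
  have hsc : StrictConvexOn ℝ (Set.Ici 0) (fun pm => γ pm Pb) :=
    (((aux_strict Nm gm d hNm hgm hdpos).add_convexOn (aux_lin c e))).congr heq.symm
  refine ⟨hsc, ?_⟩
  intro Pm_max hPmax Pm hPm
  have h0 : (0:ℝ) ∈ Set.Ici (0:ℝ) := Set.mem_Ici.2 le_rfl
  have h1 : Pm_max ∈ Set.Ici (0:ℝ) := hPmax.le
  have hseg : Pm ∈ segment ℝ (0:ℝ) Pm_max := by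
    rw [segment_eq_Icc hPmax.le]; exact hPm
  exact hsc.convexOn.le_on_segment h0 h1 hseg
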